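/- Assume condition (exp). Then δ_n > 0 for all sufficiently large n, and δ_n ≍ n^{−1/(r+1)}, i.e. there are constants C_1, C_2 > 0 and N such that C_1 n^{−1/(r+1)} ≤ δ_n ≤ C_2 n^{−1/(r+1)} for all n ≥ N. In particular δ_n → 0 and n·δ_n → ∞ as n → ∞. -/

import Mathlib

open Finset Filter

/-- The number of multisets of total size `n` determined by the parameters `a j`
(the number of one-component multisets of size `j`), i.e.
`c_n = Σ_{η ∈ Ω_n} Π_{j=1}^n C(a_j + η_j - 1, η_j)` where
`Ω_n = {η : Σ_{j=1}^n j·η_j = n}` (indices shifted: `j ∈ Fin n` stands for `j+1`). -/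
def multisetCount (a : ℕ → ℕ) (n : ℕ) : ℕ :=
  ∑ η : Fin n → Fin (n + 1),
    if ∑ j : Fin n, (j.1 + 1) * (η j).1 = n then
      ∏ j : Fin n, Nat.choose (a (j.1 + 1) + (η j).1 - 1) (η j).1
    else 0

/-- `M_n(σ) = Σ_{j=1}^n j a_j e^{-jσ}/(1-e^{-jσ})`. -/
noncomputable def Mfun (a : ℕ → ℕ) (n : ℕ) (σ : ℝ) : ℝ :=
  ∑ j ∈ Finset.Icc 1 n, (j : ℝ) * (a j) * Real.exp (-(j * σ)) / (1 - Real.exp (-(j * σ)))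

/-- Condition (exp): `a_j ≍ j^{r-1} y^j`, i.e. there are constants `D₁, D₂ > 0` with
`D₁ j^{r-1} y^j ≤ a_j ≤ D₂ j^{r-1} y^j` for all `j ≥ 1`. -/
def ExpansiveCond (a : ℕ → ℕ) (r y : ℝ) : Prop :=
  ∃ D₁ D₂ : ℝ, 0 < D₁ ∧ 0 < D₂ ∧ ∀ j : ℕ, 1 ≤ j →
    D₁ * (j : ℝ) ^ (r - 1) * y ^ j ≤ (a j : ℝ) ∧ (a j : ℝ) ≤ D₂ * (j : ℝ) ^ (r - 1) * y ^ j

section AuxDelta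
open Real

lemma aux_inv_one_sub_exp {x : ℝ} (hx : 0 < x) : (1 - Real.exp (-x))⁻¹ ≤ 1 + 1/x := by
  have h0 : Real.exp (-x) ≤ 1/(1+x) := by
    rw [Real.exp_neg]
    rw [inv_le_comm₀ (Real.exp_pos x) (by positivity), one_div, inv_inv]
    linarith [Real.add_one_le_exp x]
  have h1 : x/(1+x) ≤ 1 - Real.exp (-x) := by
    have : 1 - 1/(1+x) = x/(1+x) := by field_simp; ring
    linarith [this]
  have h2 : (0:ℝ) < x/(1+x) := by positivity
  calc (1 - Real.exp (-x))⁻¹ ≤ (x/(1+x))⁻¹ := by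
        apply inv_anti₀ h2 h1
    _ = (1+x)/x := by rw [inv_div]
    _ = 1 + 1/x := by field_simp; ring

lemma geo_sum_le {u : ℝ} (hu : 0 < u) (n : ℕ) :
    ∑ j ∈ Icc 1 n, Real.exp (-(j*u)) ≤ 1/u := by
  set q := Real.exp (-u) with hq
  have hq0 : 0 < q := Real.exp_pos _
  have hq1 : q < 1 := Real.exp_lt_one_iff.mpr (by linarith)
  have hterm : ∀ j : ℕ, Real.exp (-((j:ℝ)*u)) = q ^ j := by
    intro j
    rw [hq, ← Real.exp_nat_mul]
    ring_nf
  have h1 : ∑ j ∈ Icc 1 n, Real.exp (-(j*u)) = q * ∑ i ∈ range n, q ^ i := by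
    rw [Finset.mul_sum]
    rw [show Icc 1 n = Ico 1 (n+1) by rfl, Finset.sum_Ico_eq_sum_range]
    simp only [Nat.add_sub_cancel]
    refine Finset.sum_congr rfl fun i _ => ?_
    rw [hterm (1+i), pow_add, pow_one]
  have h2 : ∑ i ∈ range n, q ^ i ≤ (1-q)⁻¹ := by
    apply Summable.sum_le_tsum (range n) (fun i _ => by positivity)
      (summable_geometric_of_lt_one hq0.le hq1) |>.trans
    rw [tsum_geometric_of_lt_one hq0.le hq1]
  have h3 : q * (1-q)⁻¹ ≤ 1/u := by
    have hepos : (0:ℝ) < Real.exp u := Real.exp_pos u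
    have key : q*(u+1) ≤ 1 := by
      rw [hq, Real.exp_neg, inv_mul_le_iff₀ hepos]
      linarith [Real.add_one_le_exp u]
    rw [← div_eq_mul_inv, div_le_div_iff₀ (by linarith) hu]
    nlinarith
  calc ∑ j ∈ Icc 1 n, Real.exp (-(j*u)) = q * ∑ i ∈ range n, q ^ i := h1
    _ ≤ q * (1-q)⁻¹ := by nlinarith [hq0]
    _ ≤ 1/u := h3

lemma rpow_le_K_exp_half {p : ℝ} (hp : 0 ≤ p) :
    ∃ K : ℝ, 0 < K ∧ ∀ x : ℝ, 0 ≤ x → x ^ p ≤ K * Real.exp (x/2) := by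
  rcases eq_or_lt_of_le hp with rfl | hp
  · exact ⟨1, one_pos, fun x hx => by
      rw [Real.rpow_zero, one_mul]
      exact Real.one_le_exp (by positivity)⟩
  · refine ⟨(2*p/Real.exp 1) ^ p, Real.rpow_pos_of_pos (by positivity) p, fun x hx => ?_⟩
    rcases eq_or_lt_of_le hx with rfl | hx
    · rw [Real.zero_rpow hp.ne']
      positivity
    · have h1 : x ≤ (2*p/Real.exp 1) * Real.exp (x/(2*p)) := by
        have h2 := Real.add_one_le_exp (x/(2*p) - 1)
        have h3 : Real.exp (x/(2*p) - 1) = Real.exp (x/(2*p)) / Real.exp 1 :=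
          Real.exp_sub _ _
        rw [h3] at h2
        have hep : (0:ℝ) < Real.exp 1 := Real.exp_pos 1
        have h4 : x/(2*p) ≤ Real.exp (x/(2*p)) / Real.exp 1 := by linarith
        rw [div_le_div_iff₀ (by positivity) hep] at h4
        calc x = (x/(2*p)) * (2*p) := by field_simp
          _ ≤ (Real.exp (x/(2*p)) / Real.exp 1) * (2*p) := by
              apply mul_le_mul_of_nonneg_right _ (by positivity)
              rw [div_le_div_iff₀ (by positivity) hep]; linarith
          _ = (2*p/Real.exp 1) * Real.exp (x/(2*p)) := by ring
      calc x ^ p ≤ ((2*p/Real.exp 1) * Real.exp (x/(2*p))) ^ p :=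
            Real.rpow_le_rpow hx.le h1 hp.le
        _ = (2*p/Real.exp 1) ^ p * (Real.exp (x/(2*p))) ^ p := by
            rw [Real.mul_rpow (by positivity) (by positivity)]
        _ = (2*p/Real.exp 1) ^ p * Real.exp (x/2) := by
            rw [← Real.exp_mul]
            congr 1
            field_simp

lemma sum_rpow_sub_one_le {p : ℝ} (hp0 : 0 < p) (hp1 : p ≤ 1) (m : ℕ) :
    ∑ j ∈ Icc 1 m, (j:ℝ) ^ (p-1) ≤ (m:ℝ) ^ p / p := by
  induction m with
  | zero => simp [Real.zero_rpow hp0.ne', le_div_iff₀ hp0]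
  | succ m ih =>
    rw [Finset.sum_Icc_succ_top (by omega)]
    have hm1 : (0:ℝ) < (m:ℝ) + 1 := by positivity
    have key : (m:ℝ) ^ p ≤ ((m:ℝ)+1) ^ p - p * ((m:ℝ)+1) ^ (p-1) := by
      have hfrac : (0:ℝ) < 1/((m:ℝ)+1) := by positivity
      have hfrac1 : 1/((m:ℝ)+1) ≤ 1 := by
        rw [div_le_one hm1]; linarith
      have hb : ((1:ℝ) + (-(1/((m:ℝ)+1)))) ^ p ≤ 1 + p * (-(1/((m:ℝ)+1))) :=
        rpow_one_add_le_one_add_mul_self (by linarith) hp0.le hp1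
      have hmm : (m:ℝ) = ((m:ℝ)+1) * (1 + (-(1/((m:ℝ)+1)))) := by
        field_simp
        ring
      have h2 : (m:ℝ)^p = ((m:ℝ)+1)^p * ((1:ℝ) + (-(1/((m:ℝ)+1))))^p := by
        conv_lhs => rw [hmm]
        rw [Real.mul_rpow hm1.le (by linarith)]
      have h3 : ((m:ℝ)+1) ^ (p-1) = ((m:ℝ)+1)^p / ((m:ℝ)+1) := by
        rw [Real.rpow_sub hm1, Real.rpow_one]
      have h4 : ((m:ℝ)+1)^p * ((1:ℝ) + (-(1/((m:ℝ)+1))))^p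
          ≤ ((m:ℝ)+1)^p * (1 + p * (-(1/((m:ℝ)+1)))) := by
        apply mul_le_mul_of_nonneg_left hb (by positivity)
      have h5 : ((m:ℝ)+1)^p * (1 + p * (-(1/((m:ℝ)+1))))
          = ((m:ℝ)+1)^p - p * (((m:ℝ)+1)^p / ((m:ℝ)+1)) := by
        field_simp; ring
      rw [h2, h3]
      rw [h5] at h4
      linarith
    push_cast
    have : ((m:ℝ)+1) ^ (p-1) ≤ (((m:ℝ)+1) ^ p - (m:ℝ)^p)/p := by
      rw [le_div_iff₀ hp0]; linarith
    calc ∑ j ∈ Icc 1 m, (j:ℝ) ^ (p-1) + ((m:ℝ)+1) ^ (p-1)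
        ≤ (m:ℝ)^p/p + (((m:ℝ)+1) ^ p - (m:ℝ)^p)/p := by
          push_cast at ih ⊢; linarith
      _ = ((m:ℝ)+1)^p/p := by ring

lemma sum_rpow_exp_le {s : ℝ} (hs : -1 < s) :
    ∃ C : ℝ, 0 < C ∧ ∀ δ : ℝ, 0 < δ → δ ≤ 1 → ∀ n : ℕ,
      ∑ j ∈ Icc 1 n, (j:ℝ) ^ s * Real.exp (-(j*δ)) ≤ C * δ ^ (-(s+1)) := by
  rcases le_or_gt 0 s with hs0 | hs0
  · -- s ≥ 0
    obtain ⟨K, hK, hKb⟩ := rpow_le_K_exp_half hs0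
    refine ⟨2*K, by positivity, fun δ hδ hδ1 n => ?_⟩
    have hterm : ∀ j ∈ Icc 1 n, (j:ℝ) ^ s * Real.exp (-(j*δ))
        ≤ K * δ ^ (-s) * Real.exp (-(j*(δ/2))) := by
      intro j hj
      have hj1 : 1 ≤ j := (Finset.mem_Icc.mp hj).1
      have hjpos : (0:ℝ) < j := by exact_mod_cast hj1
      have h1 : ((j:ℝ)*δ) ^ s ≤ K * Real.exp ((j:ℝ)*δ/2) := hKb _ (by positivity)
      have h2 : ((j:ℝ)*δ) ^ s = (j:ℝ)^s * δ^s := Real.mul_rpow hjpos.le hδ.le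
      have h3 : (j:ℝ)^s = ((j:ℝ)*δ)^s * δ^(-s) := by
        rw [h2, Real.rpow_neg hδ.le, mul_assoc, mul_inv_cancel₀ (by
          positivity), mul_one]
      rw [h3]
      have h4 : Real.exp ((j:ℝ)*δ/2) * Real.exp (-(j*δ)) = Real.exp (-(j*(δ/2))) := by
        rw [← Real.exp_add]; ring_nf
      calc ((j:ℝ)*δ)^s * δ^(-s) * Real.exp (-(j*δ))
          ≤ (K * Real.exp ((j:ℝ)*δ/2)) * δ^(-s) * Real.exp (-(j*δ)) := by
            apply mul_le_mul_of_nonneg_right (mul_le_mul_of_nonneg_right h1 (by positivity))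
              (Real.exp_nonneg _)
        _ = K * δ^(-s) * (Real.exp ((j:ℝ)*δ/2) * Real.exp (-(j*δ))) := by ring
        _ = K * δ^(-s) * Real.exp (-(j*(δ/2))) := by rw [h4]
    calc ∑ j ∈ Icc 1 n, (j:ℝ) ^ s * Real.exp (-(j*δ))
        ≤ ∑ j ∈ Icc 1 n, K * δ ^ (-s) * Real.exp (-(j*(δ/2))) := Finset.sum_le_sum hterm
      _ = K * δ ^ (-s) * ∑ j ∈ Icc 1 n, Real.exp (-(j*(δ/2))) := by rw [Finset.mul_sum]
      _ ≤ K * δ ^ (-s) * (1/(δ/2)) := by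
          apply mul_le_mul_of_nonneg_left (geo_sum_le (by positivity) n) (by positivity)
      _ = 2*K * (δ ^ (-s) * δ^(-1:ℝ)) := by
          rw [Real.rpow_neg_one]; field_simp
      _ = 2*K * δ ^ (-(s+1)) := by
          rw [← Real.rpow_add hδ]; ring_nf
  · -- -1 < s < 0
    have hs1 : (0:ℝ) < s+1 := by linarith
    refine ⟨1/(s+1) + 1, add_pos (div_pos one_pos hs1) one_pos, fun δ hδ hδ1 n => ?_⟩
    set m := ⌊1/δ⌋₊ with hm
    have h1δ : (1:ℝ) ≤ 1/δ := by rw [le_div_iff₀ hδ]; linarith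
    have hmδ : (m:ℝ) ≤ 1/δ := Nat.floor_le (by positivity)
    have hδm : 1/δ < (m:ℝ) + 1 := Nat.lt_floor_add_one _
    have hsplit := Finset.sum_filter_add_sum_filter_not (Icc 1 n)
      (fun j => j ≤ m) (fun j => (j:ℝ) ^ s * Real.exp (-(j*δ)))
    have hpart1 : ∑ j ∈ (Icc 1 n).filter (fun j => j ≤ m), (j:ℝ) ^ s * Real.exp (-(j*δ))
        ≤ (1/(s+1)) * δ ^ (-(s+1)) := by
      have step1 : ∑ j ∈ (Icc 1 n).filter (fun j => j ≤ m), (j:ℝ) ^ s * Real.exp (-(j*δ))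
          ≤ ∑ j ∈ (Icc 1 n).filter (fun j => j ≤ m), (j:ℝ) ^ s := by
        apply Finset.sum_le_sum
        intro j hj
        have hj1 : 1 ≤ j := (Finset.mem_Icc.mp (Finset.mem_filter.mp hj).1).1
        have hjpos : (0:ℝ) < j := by exact_mod_cast hj1
        nth_rewrite 2 [← mul_one ((j:ℝ)^s)]
        apply mul_le_mul_of_nonneg_left _ (by positivity)
        apply Real.exp_le_one_iff.mpr
        have : (0:ℝ) ≤ (j:ℝ)*δ := by positivity
        linarith
      have step2 : ∑ j ∈ (Icc 1 n).filter (fun j => j ≤ m), (j:ℝ) ^ s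
          ≤ ∑ j ∈ Icc 1 m, (j:ℝ) ^ s := by
        apply Finset.sum_le_sum_of_subset_of_nonneg
        · intro j hj
          obtain ⟨hj1, hj2⟩ := Finset.mem_filter.mp hj
          exact Finset.mem_Icc.mpr ⟨(Finset.mem_Icc.mp hj1).1, hj2⟩
        · intro j hj _
          have hj1 : 1 ≤ j := (Finset.mem_Icc.mp hj).1
          have hjpos : (0:ℝ) < j := by exact_mod_cast hj1
          positivity
      have step3 : ∑ j ∈ Icc 1 m, (j:ℝ) ^ s ≤ (m:ℝ) ^ (s+1) / (s+1) := by
        have := sum_rpow_sub_one_le (p := s+1) (by linarith) (by linarith) m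
        simpa using this
      have step4 : (m:ℝ) ^ (s+1) ≤ δ ^ (-(s+1)) := by
        rcases Nat.eq_zero_or_pos m with hm0 | hm0
        · rw [hm0]
          push_cast
          rw [Real.zero_rpow (by linarith)]
          positivity
        · have hmpos : (0:ℝ) < m := by exact_mod_cast hm0
          have : δ ^ (-(s+1)) = (1/δ) ^ (s+1) := by
            rw [one_div, Real.inv_rpow hδ.le, ← Real.rpow_neg hδ.le]
          rw [this]
          exact Real.rpow_le_rpow hmpos.le hmδ (by linarith)
      calc ∑ j ∈ (Icc 1 n).filter (fun j => j ≤ m), (j:ℝ) ^ s * Real.exp (-(j*δ))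
          ≤ (m:ℝ) ^ (s+1)/(s+1) := le_trans step1 (le_trans step2 step3)
        _ ≤ δ ^ (-(s+1)) / (s+1) := by
            apply div_le_div_of_nonneg_right step4 (by linarith)
        _ = (1/(s+1)) * δ ^ (-(s+1)) := by ring
    have hpart2 : ∑ j ∈ (Icc 1 n).filter (fun j => ¬ j ≤ m), (j:ℝ) ^ s * Real.exp (-(j*δ))
        ≤ 1 * δ ^ (-(s+1)) := by
      have step1 : ∀ j ∈ (Icc 1 n).filter (fun j => ¬ j ≤ m),
          (j:ℝ) ^ s * Real.exp (-(j*δ)) ≤ δ^(-s) * Real.exp (-(j*δ)) := by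
        intro j hj
        obtain ⟨hj1, hj2⟩ := Finset.mem_filter.mp hj
        push_neg at hj2
        have hjge : 1/δ < (j:ℝ) := by
          calc 1/δ < (m:ℝ) + 1 := hδm
            _ ≤ (j:ℝ) := by exact_mod_cast hj2
        have : (j:ℝ)^s ≤ (1/δ)^s :=
          Real.rpow_le_rpow_of_nonpos (by positivity) hjge.le hs0.le
        apply mul_le_mul_of_nonneg_right _ (Real.exp_nonneg _)
        apply this.trans
        rw [one_div, ← Real.rpow_neg_one δ, ← Real.rpow_mul hδ.le]
        rw [show (-1:ℝ)*s = -s by ring]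
      calc ∑ j ∈ (Icc 1 n).filter (fun j => ¬ j ≤ m), (j:ℝ) ^ s * Real.exp (-(j*δ))
          ≤ ∑ j ∈ (Icc 1 n).filter (fun j => ¬ j ≤ m), δ^(-s) * Real.exp (-(j*δ)) :=
            Finset.sum_le_sum step1
        _ ≤ ∑ j ∈ Icc 1 n, δ^(-s) * Real.exp (-(j*δ)) := by
            apply Finset.sum_le_sum_of_subset_of_nonneg (Finset.filter_subset _ _)
            intro j _ _
            positivity
        _ = δ^(-s) * ∑ j ∈ Icc 1 n, Real.exp (-(j*δ)) := by rw [Finset.mul_sum]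
        _ ≤ δ^(-s) * (1/δ) := mul_le_mul_of_nonneg_left (geo_sum_le hδ n) (by positivity)
        _ = 1 * δ ^ (-(s+1)) := by
            rw [one_div, ← Real.rpow_neg_one δ, ← Real.rpow_add hδ, one_mul]
            ring_nf
    rw [← hsplit, add_mul]
    exact add_le_add hpart1 hpart2

lemma sum_rpow_ge {r : ℝ} (hr : 0 ≤ r) {m : ℕ} (hm : 1 ≤ m) :
    (m:ℝ) ^ (r+1) / 2 ^ (r+1) ≤ ∑ j ∈ Icc 1 m, (j:ℝ) ^ r := by
  set k := m/2 with hk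
  have hkm : k ≤ m := Nat.div_le_self m 2
  have hclt : (k:ℝ) ≤ (m:ℝ)/2 := Nat.cast_div_le
  have hm2 : (m:ℝ) ≤ 2*(k:ℝ)+1 := by
    have h1 : m ≤ 2*k+1 := by omega
    exact_mod_cast Nat.cast_le.mpr h1
  have hmpos : (0:ℝ) < m := by exact_mod_cast hm
  have half_le : (m:ℝ)/2 ≤ (k:ℝ)+1 := by linarith
  have hsub : Icc (k+1) m ⊆ Icc 1 m := fun j hj => by
    rw [Finset.mem_Icc] at *
    omega
  have hbound : ∀ j ∈ Icc (k+1) m, ((m:ℝ)/2) ^ r ≤ (j:ℝ) ^ r := by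
    intro j hj
    rw [Finset.mem_Icc] at hj
    have : (k:ℝ)+1 ≤ (j:ℝ) := by exact_mod_cast hj.1
    exact Real.rpow_le_rpow (by positivity) (by linarith) hr
  have hcard : ((Icc (k+1) m).card : ℝ) = (m:ℝ) - k := by
    rw [Nat.card_Icc]
    have : m + 1 - (k+1) = m - k := by omega
    rw [this, Nat.cast_sub hkm]
  calc (m:ℝ) ^ (r+1) / 2 ^ (r+1)
      = ((m:ℝ)/2) ^ (r+1) := by
        rw [Real.div_rpow hmpos.le (by norm_num)]
    _ = ((m:ℝ)/2) * ((m:ℝ)/2) ^ r := by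
        rw [Real.rpow_add (by positivity), Real.rpow_one]; ring
    _ ≤ ((m:ℝ) - k) * ((m:ℝ)/2) ^ r := by
        apply mul_le_mul_of_nonneg_right (by linarith) (by positivity)
    _ = ∑ _j ∈ Icc (k+1) m, ((m:ℝ)/2) ^ r := by
        rw [Finset.sum_const, nsmul_eq_mul, hcard]
    _ ≤ ∑ j ∈ Icc (k+1) m, (j:ℝ) ^ r := Finset.sum_le_sum hbound
    _ ≤ ∑ j ∈ Icc 1 m, (j:ℝ) ^ r := by
        apply Finset.sum_le_sum_of_subset_of_nonneg hsub
        intro j hj _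
        have hj1 : 1 ≤ j := (Finset.mem_Icc.mp hj).1
        have : (0:ℝ) < j := by exact_mod_cast hj1
        positivity

lemma ypow_exp {y : ℝ} (hy : 1 ≤ y) (j : ℕ) (σ : ℝ) :
    y ^ j * Real.exp (-(j*σ)) = Real.exp (-(j*(σ - Real.log y))) := by
  have hy0 : (0:ℝ) < y := by linarith
  have : y ^ j = Real.exp ((j:ℝ) * Real.log y) := by
    rw [Real.exp_nat_mul, Real.exp_log hy0]
  rw [this, ← Real.exp_add]
  ring_nf

lemma Mfun_lower {a : ℕ → ℕ} {r y D₁ : ℝ} (hD₁ : 0 < D₁) (hy : 1 ≤ y)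
    (hlo : ∀ j : ℕ, 1 ≤ j → D₁ * (j:ℝ)^(r-1) * y^j ≤ (a j : ℝ))
    (n : ℕ) {σ : ℝ} (hσ : 0 < σ) :
    D₁ * ∑ j ∈ Icc 1 n, (j:ℝ)^r * Real.exp (-(j*(σ - Real.log y))) ≤ Mfun a n σ := by
  rw [Mfun, Finset.mul_sum]
  apply Finset.sum_le_sum
  intro j hj
  have hj1 : 1 ≤ j := (Finset.mem_Icc.mp hj).1
  have hjpos : (0:ℝ) < j := by exact_mod_cast hj1
  have hx : (0:ℝ) < (j:ℝ)*σ := by positivity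
  have he1 : Real.exp (-((j:ℝ)*σ)) < 1 := Real.exp_lt_one_iff.mpr (by linarith)
  have hden : 0 < 1 - Real.exp (-((j:ℝ)*σ)) := by linarith
  have hjr : (j:ℝ)^r = (j:ℝ)^(r-1) * (j:ℝ) := by
    rw [← Real.rpow_add_one hjpos.ne' (r-1)]
    norm_num
  rw [le_div_iff₀ hden]
  have hstep : D₁ * ((j:ℝ)^r * Real.exp (-(j*(σ - Real.log y))))
      ≤ (j:ℝ) * (a j : ℝ) * Real.exp (-(j*σ)) := by
    rw [← ypow_exp hy j σ, hjr]
    calc D₁ * ((j:ℝ)^(r-1) * (j:ℝ) * (y ^ j * Real.exp (-(j*σ))))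
        = (j:ℝ) * (D₁ * (j:ℝ)^(r-1) * y^j) * Real.exp (-(j*σ)) := by ring
      _ ≤ (j:ℝ) * (a j : ℝ) * Real.exp (-(j*σ)) := by
          apply mul_le_mul_of_nonneg_right _ (Real.exp_nonneg _)
          exact mul_le_mul_of_nonneg_left (hlo j hj1) hjpos.le
  calc D₁ * ((j:ℝ)^r * Real.exp (-(j*(σ - Real.log y)))) * (1 - Real.exp (-((j:ℝ)*σ)))
      ≤ D₁ * ((j:ℝ)^r * Real.exp (-(j*(σ - Real.log y)))) * 1 := by
        apply mul_le_mul_of_nonneg_left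
          (by linarith [Real.exp_nonneg (-((j:ℝ)*σ))]) (by positivity)
    _ ≤ (j:ℝ) * (a j : ℝ) * Real.exp (-(j*σ)) := by rw [mul_one]; exact hstep

lemma Mfun_upper {a : ℕ → ℕ} {r y D₂ : ℝ} (hD₂ : 0 < D₂) (hy : 1 ≤ y)
    (hhi : ∀ j : ℕ, 1 ≤ j → (a j : ℝ) ≤ D₂ * (j:ℝ)^(r-1) * y^j)
    (n : ℕ) {σ : ℝ} (hδ : 0 < σ - Real.log y) :
    Mfun a n σ ≤ D₂ * ∑ j ∈ Icc 1 n, ((j:ℝ)^r * Real.exp (-(j*(σ - Real.log y)))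
      + (1/(σ - Real.log y)) * ((j:ℝ)^(r-1) * Real.exp (-(j*(σ - Real.log y))))) := by
  have hlog : 0 ≤ Real.log y := Real.log_nonneg hy
  set δ := σ - Real.log y with hδdef
  have hσ : 0 < σ := by linarith
  rw [Mfun, Finset.mul_sum]
  apply Finset.sum_le_sum
  intro j hj
  have hj1 : 1 ≤ j := (Finset.mem_Icc.mp hj).1
  have hjpos : (0:ℝ) < j := by exact_mod_cast hj1
  have hx : (0:ℝ) < (j:ℝ)*σ := by positivity
  have he1 : Real.exp (-((j:ℝ)*σ)) < 1 := Real.exp_lt_one_iff.mpr (by linarith)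
  have hden : 0 < 1 - Real.exp (-((j:ℝ)*σ)) := by linarith
  have hjr : (j:ℝ)^r = (j:ℝ)^(r-1) * (j:ℝ) := by
    rw [← Real.rpow_add_one hjpos.ne' (r-1)]
    norm_num
  have hinv : (1 - Real.exp (-((j:ℝ)*σ)))⁻¹ ≤ 1 + 1/((j:ℝ)*δ) := by
    calc (1 - Real.exp (-((j:ℝ)*σ)))⁻¹ ≤ 1 + 1/((j:ℝ)*σ) := aux_inv_one_sub_exp hx
      _ ≤ 1 + 1/((j:ℝ)*δ) := by
        have h1 : (0:ℝ) < (j:ℝ)*δ := by positivity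
        have h2 : (j:ℝ)*δ ≤ (j:ℝ)*σ := by nlinarith
        have := one_div_le_one_div_of_le h1 h2
        linarith
  have hnum : (j:ℝ) * (a j : ℝ) * Real.exp (-(j*σ)) ≤ D₂ * ((j:ℝ)^r * Real.exp (-(j*δ))) := by
    rw [← ypow_exp hy j σ, hjr]
    calc (j:ℝ) * (a j : ℝ) * Real.exp (-(j*σ))
        ≤ (j:ℝ) * (D₂ * (j:ℝ)^(r-1) * y^j) * Real.exp (-(j*σ)) := by
          apply mul_le_mul_of_nonneg_right
            (mul_le_mul_of_nonneg_left (hhi j hj1) hjpos.le) (Real.exp_nonneg _)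
      _ = D₂ * ((j:ℝ)^(r-1) * (j:ℝ) * (y ^ j * Real.exp (-(j*σ)))) := by ring
  have hnum0 : (0:ℝ) ≤ (j:ℝ) * (a j : ℝ) * Real.exp (-(j*σ)) := by positivity
  calc (j:ℝ) * (a j : ℝ) * Real.exp (-(j*σ)) / (1 - Real.exp (-((j:ℝ)*σ)))
      = (j:ℝ) * (a j : ℝ) * Real.exp (-(j*σ)) * (1 - Real.exp (-((j:ℝ)*σ)))⁻¹ := by
        rw [div_eq_mul_inv]
    _ ≤ (D₂ * ((j:ℝ)^r * Real.exp (-(j*δ)))) * (1 + 1/((j:ℝ)*δ)) := by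
        apply mul_le_mul hnum hinv (by positivity) (by positivity)
    _ = D₂ * ((j:ℝ)^r * Real.exp (-(j*δ)) + (1/δ) * ((j:ℝ)^r/(j:ℝ) * Real.exp (-(j*δ)))) := by
        field_simp
    _ = D₂ * ((j:ℝ)^r * Real.exp (-(j*δ)) + (1/δ) * ((j:ℝ)^(r-1) * Real.exp (-(j*δ)))) := by
        rw [hjr]
        field_simp

end AuxDelta

/-- under condition (exp), `δ_n = σ_n - log y` is eventually positive,
`δ_n ≍ n^{-1/(r+1)}`, and in particular `δ_n → 0` and `n·δ_n → ∞`. -/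

theorem delta_asymptotics (a : ℕ → ℕ) (r y : ℝ) (hr : 0 < r) (hy : 1 ≤ y)
    (hexp : ExpansiveCond a r y)
    (σ : ℕ → ℝ) (hσ : ∀ n : ℕ, 1 ≤ n → 0 < σ n ∧ Mfun a n (σ n) = n) :
    (∃ N : ℕ, ∀ n ≥ N, 0 < σ n - Real.log y) ∧
    (∃ C₁ C₂ : ℝ, 0 < C₁ ∧ 0 < C₂ ∧ ∃ N : ℕ, ∀ n ≥ N,
      C₁ * (n : ℝ) ^ (-(1 / (r + 1))) ≤ σ n - Real.log y ∧
      σ n - Real.log y ≤ C₂ * (n : ℝ) ^ (-(1 / (r + 1)))) ∧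
    Tendsto (fun n : ℕ => σ n - Real.log y) atTop (nhds 0) ∧
    Tendsto (fun n : ℕ => (n : ℝ) * (σ n - Real.log y)) atTop atTop := by
  classical
  obtain ⟨D₁, D₂, hD₁, hD₂, hb⟩ := hexp
  have hlo : ∀ j : ℕ, 1 ≤ j → D₁ * (j:ℝ)^(r-1) * y^j ≤ (a j : ℝ) := fun j hj => (hb j hj).1
  have hhi : ∀ j : ℕ, 1 ≤ j → (a j : ℝ) ≤ D₂ * (j:ℝ)^(r-1) * y^j := fun j hj => (hb j hj).2
  set L := Real.log y with hLdef
  have hL : 0 ≤ L := Real.log_nonneg hy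
  have hr1 : (0:ℝ) < r + 1 := by linarith
  obtain ⟨Cr, hCr, hCrb⟩ := sum_rpow_exp_le (s := r) (by linarith)
  obtain ⟨Cr', hCr', hCrb'⟩ := sum_rpow_exp_le (s := r-1) (by linarith)
  -- lower bound tool
  have hMlow : ∀ n : ℕ, 1 ≤ n →
      D₁ * ∑ j ∈ Icc 1 n, (j:ℝ)^r * Real.exp (-(j*(σ n - L))) ≤ (n:ℝ) := by
    intro n hn
    exact (Mfun_lower hD₁ hy hlo n (hσ n hn).1).trans (le_of_eq (hσ n hn).2)
  have key_low : ∀ m : ℕ, 1 ≤ m → ∀ δ : ℝ, ((m:ℝ) * δ ≤ 1) →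
      Real.exp (-1) * ((m:ℝ)^(r+1)/2^(r+1)) ≤
        ∑ j ∈ Icc 1 m, (j:ℝ)^r * Real.exp (-(j*δ)) := by
    intro m hm δ hmδ
    have h1 : ∑ j ∈ Icc 1 m, Real.exp (-1) * (j:ℝ)^r ≤
        ∑ j ∈ Icc 1 m, (j:ℝ)^r * Real.exp (-(j*δ)) := by
      apply Finset.sum_le_sum
      intro j hj
      obtain ⟨hj1, hj2⟩ := Finset.mem_Icc.mp hj
      have hjpos : (0:ℝ) < j := by exact_mod_cast hj1
      have hjm : (j:ℝ) ≤ m := by exact_mod_cast hj2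
      have hje : (j:ℝ) * δ ≤ 1 := by
        rcases le_or_gt δ 0 with h | h
        · nlinarith
        · nlinarith
      have : Real.exp (-1) ≤ Real.exp (-(j*δ)) := Real.exp_le_exp.mpr (by linarith)
      calc Real.exp (-1) * (j:ℝ)^r ≤ Real.exp (-(j*δ)) * (j:ℝ)^r :=
            mul_le_mul_of_nonneg_right this (by positivity)
        _ = (j:ℝ)^r * Real.exp (-(j*δ)) := by ring
    calc Real.exp (-1) * ((m:ℝ)^(r+1)/2^(r+1))
        ≤ Real.exp (-1) * ∑ j ∈ Icc 1 m, (j:ℝ)^r := by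
          apply mul_le_mul_of_nonneg_left (sum_rpow_ge hr.le hm) (Real.exp_nonneg _)
      _ = ∑ j ∈ Icc 1 m, Real.exp (-1) * (j:ℝ)^r := by rw [Finset.mul_sum]
      _ ≤ _ := h1
  -- upper bound tool (for 0 < δ ≤ 1)
  set CU := D₂ * (Cr + Cr') with hCU
  have hCUpos : 0 < CU := by positivity
  have key_up : ∀ n : ℕ, 1 ≤ n → 0 < σ n - L → σ n - L ≤ 1 →
      (n:ℝ) ≤ CU * (σ n - L) ^ (-(r+1)) := by
    intro n hn hδ hδ1
    set δ := σ n - L with hδdef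
    have h1 := Mfun_upper hD₂ hy hhi n (σ := σ n) hδ
    rw [(hσ n hn).2] at h1
    have hsplit : ∑ j ∈ Icc 1 n, ((j:ℝ)^r * Real.exp (-(j*δ))
        + (1/δ) * ((j:ℝ)^(r-1) * Real.exp (-(j*δ))))
        = (∑ j ∈ Icc 1 n, (j:ℝ)^r * Real.exp (-(j*δ)))
          + (1/δ) * ∑ j ∈ Icc 1 n, (j:ℝ)^(r-1) * Real.exp (-(j*δ)) := by
      rw [Finset.sum_add_distrib, Finset.mul_sum]
    have h2 : ∑ j ∈ Icc 1 n, (j:ℝ)^r * Real.exp (-(j*δ)) ≤ Cr * δ ^ (-(r+1)) :=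
      hCrb δ hδ hδ1 n
    have h3 : ∑ j ∈ Icc 1 n, (j:ℝ)^(r-1) * Real.exp (-(j*δ)) ≤ Cr' * δ ^ (-r) := by
      have := hCrb' δ hδ hδ1 n
      rw [show -(r-1+1) = -r by ring] at this
      exact this
    have h4 : (1/δ) * ∑ j ∈ Icc 1 n, (j:ℝ)^(r-1) * Real.exp (-(j*δ))
        ≤ Cr' * δ ^ (-(r+1)) := by
      have h5 : (1/δ) * (Cr' * δ ^ (-r)) = Cr' * δ ^ (-(r+1)) := by
        rw [show -(r+1) = -r + (-1) by ring, Real.rpow_add hδ, Real.rpow_neg_one]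
        field_simp
      rw [← h5]
      apply mul_le_mul_of_nonneg_left h3 (by positivity)
    calc (n:ℝ) ≤ D₂ * ∑ j ∈ Icc 1 n, ((j:ℝ)^r * Real.exp (-(j*δ))
          + (1/δ) * ((j:ℝ)^(r-1) * Real.exp (-(j*δ)))) := h1
      _ = D₂ * ((∑ j ∈ Icc 1 n, (j:ℝ)^r * Real.exp (-(j*δ)))
          + (1/δ) * ∑ j ∈ Icc 1 n, (j:ℝ)^(r-1) * Real.exp (-(j*δ))) := by rw [hsplit]
      _ ≤ D₂ * (Cr * δ ^ (-(r+1)) + Cr' * δ ^ (-(r+1))) := by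
          apply mul_le_mul_of_nonneg_left (add_le_add h2 h4) hD₂.le
      _ = CU * δ ^ (-(r+1)) := by rw [hCU]; ring
  -- if δ > 1 then n is bounded
  have key_up1 : ∀ n : ℕ, 1 ≤ n → 1 < σ n - L → (n:ℝ) ≤ 2 * D₂ * Cr := by
    intro n hn hδ1
    set δ := σ n - L with hδdef
    have hδ : 0 < δ := by linarith
    have h1 := Mfun_upper hD₂ hy hhi n (σ := σ n) hδ
    rw [(hσ n hn).2] at h1
    have hCr1 : ∑ j ∈ Icc 1 n, (j:ℝ)^r * Real.exp (-(j*(1:ℝ))) ≤ Cr := by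
      have := hCrb 1 one_pos le_rfl n
      rwa [Real.one_rpow, mul_one] at this
    have hterm : ∀ j ∈ Icc 1 n, (j:ℝ)^r * Real.exp (-(j*δ))
        + (1/δ) * ((j:ℝ)^(r-1) * Real.exp (-(j*δ)))
        ≤ 2 * ((j:ℝ)^r * Real.exp (-(j*(1:ℝ)))) := by
      intro j hj
      have hj1 : 1 ≤ j := (Finset.mem_Icc.mp hj).1
      have hjpos : (0:ℝ) < j := by exact_mod_cast hj1
      have hj1' : (1:ℝ) ≤ j := by exact_mod_cast hj1
      have he : Real.exp (-(j*δ)) ≤ Real.exp (-(j*(1:ℝ))) :=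
        Real.exp_le_exp.mpr (by nlinarith)
      have hjr : (j:ℝ)^(r-1) ≤ (j:ℝ)^r :=
        Real.rpow_le_rpow_of_exponent_le hj1' (by linarith)
      have hd1 : 1/δ ≤ 1 := by
        rw [div_le_one hδ]; linarith
      have t1 : (j:ℝ)^r * Real.exp (-(j*δ)) ≤ (j:ℝ)^r * Real.exp (-(j*(1:ℝ))) :=
        mul_le_mul_of_nonneg_left he (by positivity)
      have t2 : (1/δ) * ((j:ℝ)^(r-1) * Real.exp (-(j*δ)))
          ≤ (j:ℝ)^r * Real.exp (-(j*(1:ℝ))) := by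
        calc (1/δ) * ((j:ℝ)^(r-1) * Real.exp (-(j*δ)))
            ≤ 1 * ((j:ℝ)^(r-1) * Real.exp (-(j*δ))) := by
              apply mul_le_mul_of_nonneg_right hd1 (by positivity)
          _ = (j:ℝ)^(r-1) * Real.exp (-(j*δ)) := by ring
          _ ≤ (j:ℝ)^r * Real.exp (-(j*(1:ℝ))) := by
              apply mul_le_mul hjr he (Real.exp_nonneg _) (by positivity)
      linarith
    calc (n:ℝ) ≤ D₂ * ∑ j ∈ Icc 1 n, ((j:ℝ)^r * Real.exp (-(j*δ))
          + (1/δ) * ((j:ℝ)^(r-1) * Real.exp (-(j*δ)))) := h1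
      _ ≤ D₂ * ∑ j ∈ Icc 1 n, 2 * ((j:ℝ)^r * Real.exp (-(j*(1:ℝ)))) := by
          apply mul_le_mul_of_nonneg_left (Finset.sum_le_sum hterm) hD₂.le
      _ = 2 * D₂ * ∑ j ∈ Icc 1 n, (j:ℝ)^r * Real.exp (-(j*(1:ℝ))) := by
          rw [← Finset.mul_sum]; ring
      _ ≤ 2 * D₂ * Cr := by
          apply mul_le_mul_of_nonneg_left hCr1 (by positivity)
  -- n^r is eventually large
  have hnr : Tendsto (fun n : ℕ => (n:ℝ)^r) atTop atTop :=
    (tendsto_rpow_atTop hr).comp tendsto_natCast_atTop_atTop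
  have hthresh : ∀ᶠ n : ℕ in atTop, Real.exp 1 * 2^(r+1)/D₁ < (n:ℝ)^r :=
    hnr.eventually_gt_atTop _
  -- key contradiction tool : if n^r is large then n * δ_n > 1
  have key_contra : ∀ n : ℕ, 1 ≤ n → Real.exp 1 * 2^(r+1)/D₁ < (n:ℝ)^r →
      1 < (n:ℝ) * (σ n - L) := by
    intro n hn1 hTn
    by_contra hcon
    push_neg at hcon
    have hn0 : (0:ℝ) < n := by exact_mod_cast hn1
    have h1 : Real.exp (-1) * ((n:ℝ)^(r+1)/2^(r+1)) ≤
        ∑ j ∈ Icc 1 n, (j:ℝ)^r * Real.exp (-(j*(σ n - L))) :=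
      key_low n hn1 _ hcon
    have h2 := hMlow n hn1
    have h3 : (n:ℝ)^(r+1) = (n:ℝ)^r * n := by
      rw [Real.rpow_add hn0, Real.rpow_one]
    have he1 : (0:ℝ) < Real.exp (-1) := Real.exp_pos _
    have he2 : Real.exp (-1) * Real.exp 1 = 1 := by
      rw [← Real.exp_add]; norm_num
    have h2p : (0:ℝ) < 2^(r+1) := by positivity
    -- n ≥ D₁ e^{-1} n^r n / 2^{r+1} > D₁ e^{-1} (e 2^{r+1}/D₁) n /2^{r+1} = n
    have h4 : D₁ * (Real.exp (-1) * ((n:ℝ)^(r+1)/2^(r+1))) ≤ (n:ℝ) :=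
      le_trans (mul_le_mul_of_nonneg_left h1 hD₁.le) h2
    rw [h3] at h4
    have h5 : D₁ * (Real.exp (-1) * ((Real.exp 1 * 2^(r+1)/D₁) * n/2^(r+1)))
        < D₁ * (Real.exp (-1) * ((n:ℝ)^r * n/2^(r+1))) := by
      apply mul_lt_mul_of_pos_left _ hD₁
      apply mul_lt_mul_of_pos_left _ he1
      apply div_lt_div_of_pos_right _ h2p
      exact mul_lt_mul_of_pos_right hTn hn0
    have h6 : D₁ * (Real.exp (-1) * ((Real.exp 1 * 2^(r+1)/D₁) * n/2^(r+1))) = n := by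
      field_simp
      linear_combination he2
    linarith
  -- eventual positivity
  have Epos : ∀ᶠ n : ℕ in atTop, 0 < σ n - L := by
    filter_upwards [hthresh, eventually_ge_atTop 1] with n hTn hn1
    have hn0 : (0:ℝ) < n := by exact_mod_cast hn1
    have h1 := key_contra n hn1 hTn
    by_contra hcon
    push_neg at hcon
    nlinarith
  -- eventually δ ≤ 1
  have Ele1 : ∀ᶠ n : ℕ in atTop, σ n - L ≤ 1 := by
    have hbig : ∀ᶠ n : ℕ in atTop, 2 * D₂ * Cr < (n:ℝ) :=
      tendsto_natCast_atTop_atTop.eventually_gt_atTop _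
    filter_upwards [hbig, eventually_ge_atTop 1] with n hbn hn1
    by_contra hcon
    push_neg at hcon
    exact absurd (key_up1 n hn1 hcon) (by linarith)
  set q : ℝ := 1/(r+1) with hqdef
  have hq : 0 < q := by positivity
  set C₂ : ℝ := CU ^ q with hC₂def
  have hC₂ : 0 < C₂ := Real.rpow_pos_of_pos hCUpos q
  have hrq : (r+1) * q = 1 := by
    rw [hqdef]; field_simp
  -- eventual upper bound
  have E2 : ∀ᶠ n : ℕ in atTop, σ n - L ≤ C₂ * (n:ℝ) ^ (-q) := by
    filter_upwards [Epos, Ele1, eventually_ge_atTop 1] with n hpos hle1 hn1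
    set δ := σ n - L with hδdef
    have hn0 : (0:ℝ) < n := by exact_mod_cast hn1
    have h1 := key_up n hn1 hpos hle1
    have hδp : (0:ℝ) < δ ^ (r+1) := Real.rpow_pos_of_pos hpos _
    have h2 : δ ^ (r+1) ≤ CU / n := by
      rw [le_div_iff₀ hn0]
      rw [Real.rpow_neg hpos.le] at h1
      calc δ ^ (r+1) * n ≤ δ ^ (r+1) * (CU * (δ ^ (r+1))⁻¹) :=
            mul_le_mul_of_nonneg_left h1 hδp.le
        _ = CU := by field_simp
    have h3 : δ = (δ ^ (r+1)) ^ q := by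
      rw [← Real.rpow_mul hpos.le, hrq, Real.rpow_one]
    calc δ = (δ ^ (r+1)) ^ q := h3
      _ ≤ (CU / n) ^ q := Real.rpow_le_rpow hδp.le h2 hq.le
      _ = C₂ * (n:ℝ) ^ (-q) := by
          rw [Real.div_rpow hCUpos.le hn0.le, Real.rpow_neg hn0.le, hC₂def]
          rw [div_eq_mul_inv]
  -- limit of the upper bound
  have Elim : Tendsto (fun n : ℕ => C₂ * (n:ℝ) ^ (-q)) atTop (nhds 0) := by
    have h1 : Tendsto (fun n : ℕ => (n:ℝ) ^ (-q)) atTop (nhds 0) :=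
      (tendsto_rpow_neg_atTop hq).comp tendsto_natCast_atTop_atTop
    have := h1.const_mul C₂
    simpa using this
  -- eventually δ ≤ 1/2
  have Ehalf : ∀ᶠ n : ℕ in atTop, σ n - L ≤ 1/2 := by
    have h2 : ∀ᶠ n : ℕ in atTop, C₂ * (n:ℝ) ^ (-q) < 1/2 :=
      Elim.eventually_lt_const (by norm_num)
    filter_upwards [E2, h2] with n ha hb
    linarith
  -- eventual lower bound
  set A : ℝ := Real.exp 1 * 4^(r+1) / D₁ with hAdef
  have hA : 0 < A := by positivity
  set C₁ : ℝ := A ^ (-q) with hC₁def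
  have hC₁ : 0 < C₁ := Real.rpow_pos_of_pos hA _
  have E3 : ∀ᶠ n : ℕ in atTop, C₁ * (n:ℝ) ^ (-q) ≤ σ n - L := by
    filter_upwards [Epos, Ehalf, hthresh, eventually_ge_atTop 1] with n hpos hhalf hTn hn1
    set δ := σ n - L with hδdef
    have hn0 : (0:ℝ) < n := by exact_mod_cast hn1
    have hδ2 : (2:ℝ) ≤ 1/δ := by
      rw [le_div_iff₀ hpos]; linarith
    have hnδ : 1 < (n:ℝ) * δ := key_contra n hn1 hTn
    have h1δn : 1/δ < n := by
      rw [div_lt_iff₀ hpos]; linarith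
    set m : ℕ := ⌊1/δ⌋₊ with hmdef
    have hm1 : 1 ≤ m := Nat.le_floor (by linarith)
    have hmr : (m:ℝ) ≤ 1/δ := Nat.floor_le (by positivity)
    have hmlt : 1/δ < (m:ℝ) + 1 := Nat.lt_floor_add_one _
    have hmn : m ≤ n := by
      have : (m:ℝ) < n := lt_of_le_of_lt hmr h1δn
      exact_mod_cast this.le
    have hmδ : (m:ℝ) * δ ≤ 1 := by
      rw [← le_div_iff₀ hpos]; exact hmr
    have hsub : ∑ j ∈ Icc 1 m, (j:ℝ)^r * Real.exp (-(j*δ)) ≤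
        ∑ j ∈ Icc 1 n, (j:ℝ)^r * Real.exp (-(j*δ)) := by
      apply Finset.sum_le_sum_of_subset_of_nonneg
      · exact Finset.Icc_subset_Icc_right hmn
      · intro j hj _
        have hj1 : 1 ≤ j := (Finset.mem_Icc.mp hj).1
        have : (0:ℝ) < j := by exact_mod_cast hj1
        positivity
    have h4 : D₁ * (Real.exp (-1) * ((m:ℝ)^(r+1)/2^(r+1))) ≤ (n:ℝ) := by
      calc D₁ * (Real.exp (-1) * ((m:ℝ)^(r+1)/2^(r+1)))
          ≤ D₁ * ∑ j ∈ Icc 1 m, (j:ℝ)^r * Real.exp (-(j*δ)) :=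
            mul_le_mul_of_nonneg_left (key_low m hm1 δ hmδ) hD₁.le
        _ ≤ D₁ * ∑ j ∈ Icc 1 n, (j:ℝ)^r * Real.exp (-(j*δ)) :=
            mul_le_mul_of_nonneg_left hsub hD₁.le
        _ ≤ (n:ℝ) := hMlow n hn1
    have hm2δ : 1/(2*δ) ≤ (m:ℝ) := by
      have h1 : 1/(2*δ) ≤ 1/δ - 1 := by
        rw [div_le_iff₀ (by positivity : (0:ℝ) < 2*δ)]
        have h2 : (1/δ - 1) * (2*δ) = 2 - 2*δ := by field_simp
        rw [h2]; linarith
      linarith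
    have h5 : (1/(2*δ))^(r+1) ≤ (m:ℝ)^(r+1) :=
      Real.rpow_le_rpow (by positivity) hm2δ (by linarith)
    have h6 : (1/(2*δ))^(r+1) = (1/δ)^(r+1) / 2^(r+1) := by
      rw [← Real.div_rpow (by positivity) (by norm_num)]
      congr 1
      field_simp
    have h44 : (2:ℝ)^(r+1) * 2^(r+1) = 4^(r+1) := by
      rw [← Real.mul_rpow (by norm_num) (by norm_num)]
      norm_num
    have h7 : (1/δ)^(r+1) ≤ A * n := by
      have he2 : Real.exp (-1) * Real.exp 1 = 1 := by
        rw [← Real.exp_add]; norm_num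
      have h8 : D₁ * (Real.exp (-1) * ((1/δ)^(r+1) / 2^(r+1) /2^(r+1))) ≤ (n:ℝ) := by
        apply le_trans _ h4
        apply mul_le_mul_of_nonneg_left _ hD₁.le
        apply mul_le_mul_of_nonneg_left _ (Real.exp_nonneg _)
        rw [← h6]
        apply div_le_div_of_nonneg_right h5 (by positivity)
      have hep : (0:ℝ) < Real.exp 1 := Real.exp_pos _
      have hem : (0:ℝ) < Real.exp (-1) := Real.exp_pos _
      have h4p : (0:ℝ) < 4^(r+1) := by positivity
      have h8' : D₁ * Real.exp (-1) * ((1/δ)^(r+1)) / 4^(r+1) ≤ (n:ℝ) := by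
        rw [← h44]
        calc D₁ * Real.exp (-1) * ((1/δ)^(r+1)) / (2^(r+1) * 2^(r+1))
            = D₁ * (Real.exp (-1) * ((1/δ)^(r+1) / 2^(r+1) /2^(r+1))) := by ring
          _ ≤ (n:ℝ) := h8
      rw [div_le_iff₀ h4p] at h8'
      rw [hAdef, div_mul_eq_mul_div, le_div_iff₀ hD₁]
      have h15 : Real.exp 1 * (D₁ * Real.exp (-1) * ((1/δ)^(r+1)))
          ≤ Real.exp 1 * ((n:ℝ) * 4^(r+1)) := mul_le_mul_of_nonneg_left h8' hep.le
      have h16 : Real.exp 1 * (D₁ * Real.exp (-1) * ((1/δ)^(r+1)))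
          = D₁ * ((1/δ)^(r+1)) := by
        linear_combination (D₁ * ((1/δ)^(r+1))) * he2
      linarith
    have h9 : 1/δ ≤ (A*n) ^ q := by
      have h10 : 1/δ = ((1/δ)^(r+1)) ^ q := by
        rw [← Real.rpow_mul (by positivity), hrq, Real.rpow_one]
      rw [h10]
      exact Real.rpow_le_rpow (by positivity) h7 hq.le
    have h11 : (A*n) ^ q = A^q * (n:ℝ)^q := Real.mul_rpow hA.le hn0.le
    have h12 : (0:ℝ) < A^q * (n:ℝ)^q := by
      have := Real.rpow_pos_of_pos hA q
      have := Real.rpow_pos_of_pos hn0 q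
      positivity
    have h13 : C₁ * (n:ℝ) ^ (-q) = (A^q * (n:ℝ)^q)⁻¹ := by
      rw [hC₁def, Real.rpow_neg hA.le, Real.rpow_neg hn0.le, mul_inv]
    rw [h13]
    rw [h11] at h9
    have h15 := one_div_le_one_div_of_le (by positivity : (0:ℝ) < 1/δ) h9
    rw [one_div_one_div] at h15
    rw [one_div] at h15
    exact h15
  refine ⟨?_, ?_, ?_, ?_⟩
  · obtain ⟨N, hN⟩ := eventually_atTop.mp Epos
    exact ⟨N, hN⟩
  · refine ⟨C₁, C₂, hC₁, hC₂, ?_⟩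
    obtain ⟨N, hN⟩ := eventually_atTop.mp (E3.and E2)
    exact ⟨N, fun n hn => hN n hn⟩
  · apply tendsto_of_tendsto_of_tendsto_of_le_of_le' tendsto_const_nhds Elim
    · exact Epos.mono fun n h => le_of_lt h
    · exact E2
  · have htend : Tendsto (fun n : ℕ => C₁ * (n:ℝ) ^ (r/(r+1))) atTop atTop := by
      apply Tendsto.const_mul_atTop hC₁
      exact (tendsto_rpow_atTop (by positivity)).comp tendsto_natCast_atTop_atTop
    apply tendsto_atTop_mono' atTop _ htend
    filter_upwards [E3, eventually_ge_atTop 1] with n h3 hn1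
    have hn0 : (0:ℝ) < n := by exact_mod_cast hn1
    have h1 : (n:ℝ) * (C₁ * (n:ℝ)^(-q)) ≤ (n:ℝ) * (σ n - L) :=
      mul_le_mul_of_nonneg_left h3 hn0.le
    have h2 : (n:ℝ) * (C₁ * (n:ℝ)^(-q)) = C₁ * (n:ℝ)^(r/(r+1)) := by
      rw [show r/(r+1) = 1 + (-q) by rw [hqdef]; field_simp; ring]
      rw [Real.rpow_add hn0, Real.rpow_one]
      ring
    rw [h2] at h1
    exact h1
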